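/- Let d ≥ 1 and let P be a monic real polynomial of degree d with no vanishing coefficients. Let c be the number of sign changes and p the number of sign preservations in the sequence of its coefficients (so c + p = d). Let pos be the number of positive real roots and neg the number of negative real roots of P, each counted with multiplicity. Then pos ≤ c, pos ≡ c (mod 2), neg ≤ p, and neg ≡ p (mod 2). -/

import Mathlib

open Polynomial Finset

lemma multiset_prod_pos_iff (s : Multiset ℝ) (h : ∀ x ∈ s, x ≠ 0) :
    0 < s.prod ↔ Even (s.filter (fun x => x < 0)).card := by
  induction s using Multiset.induction with
  | empty => simp
  | cons a s ih =>
    have ha : a ≠ 0 := h a (Multiset.mem_cons_self a s)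
    have ih' := ih (fun x hx => h x (Multiset.mem_cons_of_mem hx))
    have hsne : s.prod ≠ 0 := by
      simp only [Ne, Multiset.prod_eq_zero_iff]
      intro h0
      exact h 0 (Multiset.mem_cons_of_mem h0) rfl
    rcases lt_trichotomy a 0 with hlt | he | hgt
    · rw [Multiset.prod_cons, Multiset.filter_cons_of_pos (p := fun x => x < 0) _ hlt,
        Multiset.card_cons, Nat.even_add_one, ← ih']
      constructor
      · intro hp hsp; nlinarith
      · intro hnp
        rcases hsne.lt_or_gt with hneg | hpos
        · nlinarith
        · exact absurd hpos hnp
    · exact absurd he ha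
    · rw [Multiset.prod_cons,
        Multiset.filter_cons_of_neg (p := fun x => x < 0) _ (not_lt.mpr hgt.le), ← ih']
      constructor
      · intro hp; nlinarith
      · intro hp; exact mul_pos hgt hp

lemma coeff_comp_neg_X (p : Polynomial ℝ) (j : ℕ) :
    (p.comp (-X)).coeff j = (-1)^j * p.coeff j := by
  induction p using Polynomial.induction_on' with
  | add p q hp hq => simp [add_comp, hp, hq]; ring
  | monomial n a =>
    have h1 : ((-X : Polynomial ℝ))^n = C ((-1:ℝ)^n) * X^n := by
      rw [neg_pow, map_pow, map_neg, map_one]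
    rw [← C_mul_X_pow_eq_monomial, mul_comp, C_comp, X_pow_comp, h1, ← mul_assoc, ← C_mul,
      coeff_C_mul, coeff_C_mul, coeff_X_pow]
    split_ifs with h
    · subst h; ring
    · ring

lemma comp_neg_X_ne_zero {p : Polynomial ℝ} (hp : p ≠ 0) : p.comp (-X) ≠ 0 := by
  intro h
  have := congrArg (fun q => Polynomial.comp q (-X)) h
  simp only [comp_neg_X_comp_neg_X, zero_comp] at this
  exact hp this

lemma rootMultiplicity_comp_neg_X (p : Polynomial ℝ) (hp : p ≠ 0) (a : ℝ) :
    (p.comp (-X)).rootMultiplicity a = p.rootMultiplicity (-a) := by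
  have hc : p.comp (-X) ≠ 0 := comp_neg_X_ne_zero hp
  have key : ∀ n : ℕ, n ≤ (p.comp (-X)).rootMultiplicity a ↔ n ≤ p.rootMultiplicity (-a) := by
    intro n
    rw [le_rootMultiplicity_iff hc, le_rootMultiplicity_iff hp,
      dvd_comp_neg_X_iff]
    have h2 : ((X - C a) ^ n).comp (-X) = ((-1 : Polynomial ℝ))^n * (X - C (-a)) ^ n := by
      rw [pow_comp, sub_comp, X_comp, C_comp, map_neg, ← mul_pow]
      ring_nf
    rw [h2, mul_comm, IsUnit.mul_right_dvd ((isUnit_one.neg (α := Polynomial ℝ)).pow n)]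
  exact le_antisymm ((key _).mp le_rfl) ((key _).mpr le_rfl)

lemma roots_comp_neg_X (p : Polynomial ℝ) (hp : p ≠ 0) :
    (p.comp (-X)).roots = p.roots.map (fun x => -x) := by
  have hc : p.comp (-X) ≠ 0 := comp_neg_X_ne_zero hp
  ext a
  rw [count_roots, rootMultiplicity_comp_neg_X p hp a]
  have : a = -(-a) := (neg_neg a).symm
  rw [this, Multiset.count_map_eq_count' _ _ neg_injective, neg_neg, count_roots]

lemma sign_chain (g : ℕ → ℝ) : ∀ d : ℕ, (∀ j ≤ d, g j ≠ 0) →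
    (0 < g 0 ↔ (Even ((Finset.range d).filter (fun j => g (j+1) * g j < 0)).card ↔ 0 < g d)) := by
  intro d
  induction d with
  | zero => simp
  | succ d ih =>
    intro h
    have ih' := ih (fun j hj => h j (hj.trans (Nat.le_succ d)))
    rw [Finset.range_add_one, Finset.filter_insert]
    have hgd := h d (Nat.le_succ d)
    have hgd1 := h (d+1) le_rfl
    rcases hgd1.lt_or_gt with h1 | h1 <;> rcases hgd.lt_or_gt with h2 | h2
    · rw [if_neg (by nlinarith)]
      rw [ih']
      have e1 : ¬ 0 < g d := not_lt.mpr h2.le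
      have e2 : ¬ 0 < g (d+1) := not_lt.mpr h1.le
      tauto
    · rw [if_pos (by nlinarith), Finset.card_insert_of_notMem (by simp), Nat.even_add_one]
      rw [ih']
      have e2 : ¬ 0 < g (d+1) := not_lt.mpr h1.le
      tauto
    · rw [if_pos (by nlinarith), Finset.card_insert_of_notMem (by simp), Nat.even_add_one]
      rw [ih']
      have e1 : ¬ 0 < g d := not_lt.mpr h2.le
      tauto
    · rw [if_neg (by nlinarith)]
      rw [ih']
      tauto

lemma sum_count_le (s : Finset ℝ) (m : Multiset ℝ) : ∑ x ∈ s, m.count x ≤ Multiset.card m := by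
  classical
  have h1 : ∑ x ∈ s ∩ m.toFinset, m.count x = ∑ x ∈ s, m.count x := by
    apply Finset.sum_subset (Finset.inter_subset_left)
    intro x hx hnx
    rw [Multiset.count_eq_zero]
    intro hmem
    exact hnx (Finset.mem_inter.mpr ⟨hx, Multiset.mem_toFinset.mpr hmem⟩)
  rw [← h1, ← Multiset.toFinset_sum_count_eq m]
  exact Finset.sum_le_sum_of_subset (Finset.inter_subset_right)

lemma pos_card_roots_le_derivative (p : Polynomial ℝ) :
    Multiset.card (p.roots.filter (fun x => 0 < x)) ≤
      Multiset.card ((derivative p).roots.filter (fun x => 0 < x)) + 1 := by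
  classical
  rcases eq_or_ne (derivative p) 0 with hp' | hp'
  · rcases eq_or_ne p 0 with rfl | hp
    · simp
    · rw [eq_C_of_derivative_eq_zero hp', roots_C]
      simp
  have hp : p ≠ 0 := ne_of_apply_ne derivative (by rwa [derivative_zero])
  set S : Finset ℝ := p.roots.toFinset.filter (fun x => 0 < x) with hS
  set S' : Finset ℝ := (derivative p).roots.toFinset.filter (fun x => 0 < x) with hS'
  set R : Multiset ℝ := p.roots.filter (fun x => 0 < x) with hR
  set R' : Multiset ℝ := (derivative p).roots.filter (fun x => 0 < x) with hR'
  have hinter : S.card ≤ (S' \ S).card + 1 := by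
    refine Finset.card_le_diff_of_interleaved fun x hx y hy hxy _ => ?_
    rw [hS, Finset.mem_filter, Multiset.mem_toFinset, mem_roots hp] at hx hy
    obtain ⟨z, hz1, hz2⟩ := exists_deriv_eq_zero hxy p.continuousOn (hx.1.trans hy.1.symm)
    refine ⟨z, ?_, hz1.1, hz1.2⟩
    rw [hS', Finset.mem_filter, Multiset.mem_toFinset, mem_roots hp']
    exact ⟨by rwa [IsRoot, ← p.deriv], hx.2.trans hz1.1⟩
  have hRS : R.toFinset = S := by
    rw [hR, hS, Multiset.toFinset_filter]
  have hRS' : R'.toFinset = S' := by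
    rw [hR', hS', Multiset.toFinset_filter]
  have hcountR : ∀ x ∈ S, R.count x = p.roots.count x := by
    intro x hx
    rw [hR, Multiset.count_filter_of_pos (Finset.mem_filter.mp hx).2]
  have hcountR' : ∀ x : ℝ, 0 < x → R'.count x = (derivative p).roots.count x := by
    intro x hx
    rw [hR', Multiset.count_filter_of_pos hx]
  calc Multiset.card R = ∑ x ∈ S, R.count x := by
        rw [← hRS, Multiset.toFinset_sum_count_eq]
    _ = ∑ x ∈ S, p.roots.count x := Finset.sum_congr rfl hcountR
    _ = ∑ x ∈ S, (p.roots.count x - 1 + 1) := by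
        refine Finset.sum_congr rfl fun x hx => ?_
        have : 0 < p.roots.count x := Multiset.count_pos.2 (Multiset.mem_toFinset.1
          (Finset.mem_filter.mp hx).1)
        omega
    _ = (∑ x ∈ S, (p.rootMultiplicity x - 1)) + S.card := by
        simp only [Finset.sum_add_distrib, Finset.card_eq_sum_ones, count_roots]
    _ ≤ (∑ x ∈ S, (derivative p).rootMultiplicity x) + ((S' \ S).card + 1) :=
        add_le_add (Finset.sum_le_sum fun x _ =>
          p.rootMultiplicity_sub_one_le_derivative_rootMultiplicity x) hinter
    _ ≤ (∑ x ∈ S, R'.count x) + ((∑ x ∈ S' \ S, R'.count x) + 1) := by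
        refine add_le_add (le_of_eq ?_) (Nat.add_le_add_right ?_ 1)
        · refine Finset.sum_congr rfl fun x hx => ?_
          rw [hcountR' x (Finset.mem_filter.mp hx).2, count_roots]
        · rw [Finset.card_eq_sum_ones]
          refine Finset.sum_le_sum fun x hx => ?_
          have hx' := Finset.mem_sdiff.mp hx
          have h1 : 0 < x := (Finset.mem_filter.mp hx'.1).2
          rw [hcountR' x h1]
          exact Nat.succ_le_iff.2 (Multiset.count_pos.2 (Multiset.mem_toFinset.1
            (Finset.mem_filter.mp hx'.1).1))
    _ = (∑ x ∈ S ∪ (S' \ S), R'.count x) + 1 := by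
        rw [Finset.sum_union Finset.disjoint_sdiff, add_assoc]
    _ ≤ Multiset.card R' + 1 := Nat.add_le_add_right (sum_count_le _ _) 1

lemma pos_roots_even_iff (P : Polynomial ℝ) (hlead : 0 < P.leadingCoeff)
    (h0 : P.coeff 0 ≠ 0) :
    (0 < P.coeff 0 ↔ Even (P.roots.filter (fun x => 0 < x)).card) := by
  have hP : P ≠ 0 := fun h => h0 (by simp [h])
  obtain ⟨Q, hQ, hdeg, hroots⟩ := P.exists_prod_multiset_X_sub_C_mul
  have hQ0 : Q ≠ 0 := by
    rintro rfl
    rw [mul_zero] at hQ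
    exact hP hQ.symm
  have hQl : Q.leadingCoeff = P.leadingCoeff := by
    conv_rhs => rw [← hQ]
    rw [leadingCoeff_mul, (monic_multisetProd_X_sub_C _).leadingCoeff, one_mul]
  have hQnoroot : ∀ x : ℝ, Q.eval x ≠ 0 := by
    intro x hx
    have : x ∈ Q.roots := by rw [mem_roots hQ0]; exact hx
    rw [hroots] at this
    exact absurd this (Multiset.notMem_zero x)
  have hQpos : ∀ x : ℝ, 0 < Q.eval x := by
    intro x
    rcases (hQnoroot x).lt_or_gt with hneg | hpos
    · exfalso
      rcases Nat.eq_zero_or_pos Q.natDegree with h | h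
      · rw [eq_C_of_natDegree_eq_zero h] at hneg
        simp only [eval_C] at hneg
        rw [eq_C_of_natDegree_eq_zero h] at hQl
        rw [leadingCoeff_C] at hQl
        rw [hQl] at hneg
        linarith
      · have hdegQ : 0 < Q.degree := natDegree_pos_iff_degree_pos.mp h
        have htop : Filter.Tendsto (fun x => Q.eval x) Filter.atTop Filter.atTop :=
          Q.tendsto_atTop_of_leadingCoeff_nonneg hdegQ (by rw [hQl]; exact hlead.le)
        obtain ⟨y, hxy, hy⟩ := ((Filter.eventually_gt_atTop x).and
          (htop.eventually_gt_atTop 0)).exists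
        obtain ⟨z, _, hz⟩ := intermediate_value_Icc hxy.le Q.continuous_aeval.continuousOn
          (Set.mem_Icc.mpr ⟨hneg.le, hy.le⟩)
        exact hQnoroot z hz
    · exact hpos
  have hrne : ∀ x ∈ P.roots, x ≠ (0:ℝ) := by
    rintro x hx rfl
    have := isRoot_of_mem_roots hx
    rw [IsRoot, ← coeff_zero_eq_eval_zero] at this
    exact h0 this
  have heval : P.coeff 0 = (P.roots.map (fun a => -a)).prod * Q.eval 0 := by
    conv_lhs => rw [← hQ]
    rw [coeff_zero_eq_eval_zero, eval_mul, eval_multiset_prod, Multiset.map_map]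
    congr 2
    apply Multiset.map_congr rfl
    intro x _
    simp
  have hmapne : ∀ x ∈ P.roots.map (fun a => -a), x ≠ (0:ℝ) := by
    intro x hx
    obtain ⟨a, ha, rfl⟩ := Multiset.mem_map.mp hx
    simpa using hrne a ha
  have hfilt : ((P.roots.map (fun a => -a)).filter (fun x => x < 0)).card
      = (P.roots.filter (fun x => 0 < x)).card := by
    rw [Multiset.filter_map]
    rw [Multiset.card_map]
    congr 1
    apply Multiset.filter_congr
    intro x _
    simp
  rw [heval, ← hfilt, ← multiset_prod_pos_iff _ hmapne]
  have hq0 := hQpos 0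
  constructor
  · intro h; nlinarith
  · intro h; exact mul_pos h hq0

lemma descartes_parity (d : ℕ) (P : Polynomial ℝ) (hdeg : P.natDegree = d)
    (hlead : 0 < P.leadingCoeff) (hnz : ∀ j ≤ d, P.coeff j ≠ 0) :
    Multiset.card (P.roots.filter (fun x => 0 < x)) % 2
      = ((Finset.range d).filter (fun j => P.coeff (j+1) * P.coeff j < 0)).card % 2 := by
  have h0 : P.coeff 0 ≠ 0 := hnz 0 (Nat.zero_le d)
  have h1 := pos_roots_even_iff P hlead h0
  have h2 := sign_chain P.coeff d hnz
  have hd : 0 < P.coeff d := by rw [← hdeg, coeff_natDegree]; exact hlead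
  rw [Nat.even_iff] at h1 h2
  simp only [hd, iff_true] at h2
  by_cases h : 0 < P.coeff 0
  · have e1 := h1.mp h
    have e2 := h2.mp h
    omega
  · have e1 : ¬ Multiset.card (Multiset.filter (fun x => 0 < x) P.roots) % 2 = 0 :=
      fun hh => h (h1.mpr hh)
    have e2 : ¬ ((Finset.range d).filter (fun j => P.coeff (j+1) * P.coeff j < 0)).card % 2 = 0 :=
      fun hh => h (h2.mpr hh)
    omega

lemma descartes_bound : ∀ d : ℕ, ∀ P : Polynomial ℝ, P.natDegree = d → 0 < P.leadingCoeff →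
    (∀ j ≤ d, P.coeff j ≠ 0) →
    Multiset.card (P.roots.filter (fun x => 0 < x)) ≤
      ((Finset.range d).filter (fun j => P.coeff (j+1) * P.coeff j < 0)).card := by
  intro d
  induction d with
  | zero =>
    intro P hdeg _ hnz
    rw [eq_C_of_natDegree_eq_zero hdeg, roots_C]
    simp
  | succ d ih =>
    intro P hdeg hlead hnz
    have hd1 : P.coeff (d+1) = P.leadingCoeff := by rw [← hdeg, coeff_natDegree]
    have hcoeff' : ∀ j : ℕ, (derivative P).coeff j = P.coeff (j+1) * ((j:ℝ)+1) := by
      intro j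
      rw [coeff_derivative]
      try push_cast
      try ring
    have hdeg' : (derivative P).natDegree = d := by
      refine le_antisymm ?_ (le_natDegree_of_ne_zero ?_)
      · have := natDegree_derivative_le P
        omega
      · rw [hcoeff', hd1]
        positivity
    have hlead' : 0 < (derivative P).leadingCoeff := by
      rw [leadingCoeff, hdeg', hcoeff', hd1]
      positivity
    have hnz' : ∀ j ≤ d, (derivative P).coeff j ≠ 0 := by
      intro j hj
      rw [hcoeff']
      have h1 : P.coeff (j+1) ≠ 0 := hnz (j+1) (by omega)
      positivity
    have hsplit : ((Finset.range (d+1)).filter (fun j => P.coeff (j+1) * P.coeff j < 0)).card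
        = ((Finset.range d).filter
            (fun j => (derivative P).coeff (j+1) * (derivative P).coeff j < 0)).card
          + (if P.coeff 1 * P.coeff 0 < 0 then 1 else 0) := by
      rw [Finset.card_filter, Finset.card_filter, Finset.sum_range_succ']
      congr 1
      refine Finset.sum_congr rfl fun j _ => ?_
      refine if_congr ?_ rfl rfl
      rw [hcoeff', hcoeff']
      push_cast
      have hj1 : (0:ℝ) < (j:ℝ) + 1 := by positivity
      have hj2 : (0:ℝ) < ((j:ℝ) + 1) + 1 := by positivity
      constructor
      · intro h
        nlinarith [mul_pos hj1 hj2]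
      · intro h
        nlinarith [mul_pos hj1 hj2]
    have hrolle := pos_card_roots_le_derivative P
    have hih := ih (derivative P) hdeg' hlead' hnz'
    have hpar := descartes_parity (d+1) P hdeg hlead hnz
    by_cases hc : P.coeff 1 * P.coeff 0 < 0
    · rw [hsplit, if_pos hc]
      omega
    · rw [hsplit, if_neg hc] at hpar ⊢
      omega

theorem stmt_17 (d : ℕ) (hd : 1 ≤ d) (P : Polynomial ℝ)
    (hmonic : P.Monic) (hdeg : P.natDegree = d)
    (hnz : ∀ j, j ≤ d → P.coeff j ≠ 0)
    (c p pos neg : ℕ)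
    (hc : c = ((Finset.range d).filter (fun j => P.coeff (j+1) * P.coeff j < 0)).card)
    (hp : p = ((Finset.range d).filter (fun j => 0 < P.coeff (j+1) * P.coeff j)).card)
    (hpos : pos = (P.roots.filter (fun x => 0 < x)).card)
    (hneg : neg = (P.roots.filter (fun x => x < 0)).card) :
    pos ≤ c ∧ pos % 2 = c % 2 ∧ neg ≤ p ∧ neg % 2 = p % 2 := by
  have hlead : 0 < P.leadingCoeff := by rw [hmonic.leadingCoeff]; exact one_pos
  have hnz' : ∀ j ≤ d, P.coeff j ≠ 0 := fun j hj => hnz j hj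
  have hPne : P ≠ 0 := hmonic.ne_zero
  -- positive part
  have hb := descartes_bound d P hdeg hlead hnz'
  have hpar := descartes_parity d P hdeg hlead hnz'
  refine ⟨by rw [hpos, hc]; exact hb, by rw [hpos, hc]; exact hpar, ?_, ?_⟩
  -- negative part
  all_goals {
  set Q : Polynomial ℝ := C ((-1:ℝ)^d) * (P.comp (-X)) with hQdef
  have hsq : ∀ n : ℕ, ((-1:ℝ)^n) * ((-1:ℝ)^n) = 1 := by
    intro n
    rw [← pow_add]
    exact Even.neg_one_pow ⟨n, rfl⟩
  have hQcoeff : ∀ j, Q.coeff j = (-1:ℝ)^d * ((-1)^j * P.coeff j) := by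
    intro j
    rw [hQdef, coeff_C_mul, coeff_comp_neg_X]
  have hPcd : P.coeff d = 1 := by
    rw [← hdeg]
    exact hmonic.coeff_natDegree
  have hQcd : Q.coeff d = 1 := by
    rw [hQcoeff, hPcd, mul_one, hsq]
  have hQnz : ∀ j ≤ d, Q.coeff j ≠ 0 := by
    intro j hj
    rw [hQcoeff]
    have h1 := hnz' j hj
    have h2 : ((-1:ℝ)^d) ≠ 0 := by positivity
    have h3 : ((-1:ℝ)^j) ≠ 0 := by positivity
    exact mul_ne_zero h2 (mul_ne_zero h3 h1)
  have hQdeg : Q.natDegree = d := by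
    refine le_antisymm (natDegree_le_iff_coeff_eq_zero.mpr fun m hm => ?_)
      (le_natDegree_of_ne_zero (by rw [hQcd]; exact one_ne_zero))
    rw [hQcoeff, coeff_eq_zero_of_natDegree_lt (by rw [hdeg]; exact hm), mul_zero, mul_zero]
  have hQlead : 0 < Q.leadingCoeff := by
    rw [leadingCoeff, hQdeg, hQcd]
    exact one_pos
  have hQroots : Q.roots = P.roots.map (fun x => -x) := by
    rw [hQdef, roots_C_mul _ (by positivity : ((-1:ℝ)^d) ≠ 0), roots_comp_neg_X P hPne]
  have hcards : Multiset.card (Q.roots.filter (fun x => 0 < x))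
      = Multiset.card (P.roots.filter (fun x => x < 0)) := by
    rw [hQroots, Multiset.filter_map, Multiset.card_map]
    congr 1
    apply Multiset.filter_congr
    intro x _
    simp
  have hprod : ∀ j : ℕ, Q.coeff (j+1) * Q.coeff j = -(P.coeff (j+1) * P.coeff j) := by
    intro j
    have h1 := hsq d
    have h2 := hsq j
    rw [hQcoeff, hQcoeff, pow_succ]
    linear_combination (-(P.coeff (j+1) * P.coeff j) * ((-1:ℝ)^j * (-1)^j)) * h1
      + (-(P.coeff (j+1) * P.coeff j)) * h2
  have hcQ : ((Finset.range d).filter (fun j => Q.coeff (j+1) * Q.coeff j < 0)).card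
      = ((Finset.range d).filter (fun j => 0 < P.coeff (j+1) * P.coeff j)).card := by
    congr 1
    apply Finset.filter_congr
    intro j _
    rw [hprod, neg_lt_zero]
  have hbQ := descartes_bound d Q hQdeg hQlead hQnz
  have hparQ := descartes_parity d Q hQdeg hQlead hQnz
  rw [hcards, hcQ] at hbQ hparQ
  first
  | (rw [hneg, hp]; exact hbQ)
  | (rw [hneg, hp]; exact hparQ) }
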